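/- arXiv:1101.1199 — 4 statements merged into one kernel-verified Lean document; each statement's English description precedes it below -/
import Mathlib

section
/- Let 0 < σ₁ < 1/2 and define ψ(u) = u/(1−σ₁) − ∑_{n<u} (1−n/u)^{−σ₁} for u > 0. Then for every k ≥ 1, ∫_k^{k+1} |u^{1−σ₁}/(1−σ₁) − ∑_{n=1}^{k} (u−n)^{−σ₁}|² du ≤ ∫_0^1 ((u+1)^{1−σ₁}/(1−σ₁) + u^{−σ₁})² du, and this bound is finite and independent of k. -/
open MeasureTheory Set

-- L1: (a+1)^(1-σ) - a^(1-σ) ≤ (1-σ) * a^(-σ)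
lemma aux_L1 {σ a : ℝ} (h0 : 0 < σ) (h1 : σ < 1) (ha : 0 < a) :
    (a+1)^(1-σ) - a^(1-σ) ≤ (1-σ) * a^(-σ) := by
  have hs : (0:ℝ) < 1 - σ := by linarith
  have he : -σ + 1 = 1 - σ := by ring
  have hI : ∫ x in a..(a+1), x^(-σ) = ((a+1)^(1-σ) - a^(1-σ)) / (1-σ) := by
    rw [integral_rpow (Or.inl (by linarith)), he]
  have hmono : ∫ x in a..(a+1), x^(-σ) ≤ ∫ x in a..(a+1), a^(-σ) := by
    apply intervalIntegral.integral_mono_on (by linarith)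
    · exact intervalIntegral.intervalIntegrable_rpow' (by linarith)
    · exact intervalIntegrable_const
    · intro x hx
      exact Real.rpow_le_rpow_of_nonpos ha hx.1 (by linarith)
  rw [hI] at hmono
  simp only [intervalIntegral.integral_const, smul_eq_mul] at hmono
  have h2 : ((a+1)^(1-σ) - a^(1-σ)) / (1-σ) ≤ a^(-σ) := by
    calc _ ≤ (a + 1 - a) * a^(-σ) := hmono
    _ = a^(-σ) := by ring
  calc (a+1)^(1-σ) - a^(1-σ) = ((a+1)^(1-σ) - a^(1-σ)) / (1-σ) * (1-σ) := by
        field_simp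
  _ ≤ a^(-σ) * (1-σ) := by nlinarith
  _ = (1-σ) * a^(-σ) := by ring

lemma aux_L2 {σ a : ℝ} (h0 : 0 < σ) (h1 : σ < 1) (ha : 0 < a) :
    (1-σ) * (a+1)^(-σ) ≤ (a+1)^(1-σ) - a^(1-σ) := by
  have hs : (0:ℝ) < 1 - σ := by linarith
  have he : -σ + 1 = 1 - σ := by ring
  have hI : ∫ x in a..(a+1), x^(-σ) = ((a+1)^(1-σ) - a^(1-σ)) / (1-σ) := by
    rw [integral_rpow (Or.inl (by linarith)), he]
  have hmono : ∫ x in a..(a+1), (a+1)^(-σ) ≤ ∫ x in a..(a+1), x^(-σ) := by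
    apply intervalIntegral.integral_mono_on (by linarith)
    · exact intervalIntegrable_const
    · exact intervalIntegral.intervalIntegrable_rpow' (by linarith)
    · intro x hx
      exact Real.rpow_le_rpow_of_nonpos (by linarith [hx.1]) hx.2 (by linarith)
  rw [hI] at hmono
  simp only [intervalIntegral.integral_const, smul_eq_mul] at hmono
  have h2 : (a+1)^(-σ) ≤ ((a+1)^(1-σ) - a^(1-σ)) / (1-σ) := by
    calc (a+1)^(-σ) = (a + 1 - a) * (a+1)^(-σ) := by ring
    _ ≤ _ := hmono
  have := mul_le_mul_of_nonneg_left h2 hs.le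
  calc (1-σ) * (a+1)^(-σ) ≤ (1-σ) * (((a+1)^(1-σ) - a^(1-σ)) / (1-σ)) := this
  _ = (a+1)^(1-σ) - a^(1-σ) := by field_simp

lemma aux_tel (s u : ℝ) (k : ℕ) :
    ∑ n ∈ Finset.Icc 1 k, ((u - n + 1)^s - (u - n)^s) = u^s - (u - k)^s := by
  induction k with
  | zero => simp
  | succ k ih =>
    rw [Finset.sum_Icc_succ_top (Nat.succ_le_succ (Nat.zero_le k)), ih]
    push_cast
    have h1 : u - (k+1:ℝ) + 1 = u - k := by ring
    rw [h1]
    ring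

lemma aux_ptwise (σ : ℝ) (h0 : 0 < σ) (h1 : σ < 1) (k : ℕ) (hk : 1 ≤ k) (u : ℝ)
    (hu : u ∈ Set.Ioc (k:ℝ) (k+1)) :
    (u^(1-σ)/(1-σ) - ∑ n ∈ Finset.Icc 1 k, (u - (n:ℝ))^(-σ))^2
      ≤ ((u - k + 1)^(1-σ)/(1-σ) + (u - k)^(-σ))^2 := by
  have hs : (0:ℝ) < 1 - σ := by linarith
  have hku : (k:ℝ) < u := hu.1
  have hub : u ≤ (k:ℝ) + 1 := hu.2
  have huk : 0 < u - k := by linarith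
  have hk1 : (1:ℝ) ≤ (k:ℝ) := by exact_mod_cast hk
  set S := ∑ n ∈ Finset.Icc 1 k, (u - (n:ℝ))^(-σ) with hS
  -- lower bound on S
  have hsumlb : u^(1-σ) - (u-k)^(1-σ) ≤ (1-σ) * S := by
    rw [← aux_tel (1-σ) u k, hS, Finset.mul_sum]
    apply Finset.sum_le_sum
    intro n hn
    have hn2 := (Finset.mem_Icc.1 hn).2
    have hpos : 0 < u - n := by
      have : (n:ℝ) ≤ (k:ℝ) := by exact_mod_cast hn2
      linarith
    exact aux_L1 (a := u - (n:ℝ)) h0 h1 hpos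
  -- upper bound on S
  obtain ⟨m, rfl⟩ : ∃ m, k = m + 1 := ⟨k - 1, (Nat.succ_pred_eq_of_pos hk).symm⟩
  have hmc : ((m+1 : ℕ) : ℝ) = (m:ℝ) + 1 := by push_cast; ring
  have hsumub : S ≤ ((u-1)^(1-σ) - (u-(m+1:ℕ))^(1-σ))/(1-σ) + (u-(m+1:ℕ))^(-σ) := by
    rw [hS, Finset.sum_Icc_succ_top (Nat.succ_le_succ (Nat.zero_le m))]
    have step : (1-σ) * ∑ n ∈ Finset.Icc 1 m, (u - (n:ℝ))^(-σ)
        ≤ (u-1)^(1-σ) - (u-1-(m:ℝ))^(1-σ) := by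
      rw [← aux_tel (1-σ) (u-1) m, Finset.mul_sum]
      apply Finset.sum_le_sum
      intro n hn
      have hn2 := (Finset.mem_Icc.1 hn).2
      have hpos : 0 < u - (n:ℝ) - 1 := by
        have : (n:ℝ) ≤ (m:ℝ) := by exact_mod_cast hn2
        rw [hmc] at hku; linarith
      have h2 := aux_L2 (a := u - (n:ℝ) - 1) h0 h1 hpos
      have e1 : u - (n:ℝ) - 1 + 1 = u - n := by ring
      rw [e1] at h2
      have e2 : u - 1 - (n:ℝ) + 1 = u - n := by ring
      have e3 : u - 1 - (n:ℝ) = u - n - 1 := by ring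
      rw [e2, e3]
      linarith
    have e4 : u - 1 - (m:ℝ) = u - ((m+1:ℕ):ℝ) := by rw [hmc]; ring
    rw [e4] at step
    have : ∑ n ∈ Finset.Icc 1 m, (u - (n:ℝ))^(-σ)
        ≤ ((u-1)^(1-σ) - (u-((m+1:ℕ):ℝ))^(1-σ))/(1-σ) := by
      rw [le_div_iff₀ hs]; linarith
    linarith
  set t := u - ((m+1:ℕ):ℝ) with ht
  have htpos : 0 < t := huk
  have ht1 : t ≤ 1 := by rw [ht]; linarith
  have hts : t^(1-σ) ≤ 1 := Real.rpow_le_one htpos.le ht1 hs.le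
  have hts0 : 0 ≤ t^(1-σ) := Real.rpow_nonneg htpos.le _
  have htneg : 0 ≤ t^(-σ) := Real.rpow_nonneg htpos.le _
  have htp1 : (1:ℝ) ≤ (t+1)^(1-σ) :=
    Real.one_le_rpow (by linarith) hs.le
  have hu1 : (u-1)^(1-σ) ≤ u^(1-σ) :=
    Real.rpow_le_rpow (by rw [hmc] at hku; linarith) (by linarith) hs.le
  apply sq_le_sq'
  · -- lower
    have hub2 : S ≤ ((u-1)^(1-σ) - t^(1-σ))/(1-σ) + t^(-σ) := hsumub
    have hd : u^(1-σ)/(1-σ) - ((u-1)^(1-σ) - t^(1-σ))/(1-σ)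
        = (u^(1-σ) - (u-1)^(1-σ) + t^(1-σ))/(1-σ) := by ring
    have hnn : 0 ≤ (u^(1-σ) - (u-1)^(1-σ) + t^(1-σ))/(1-σ) :=
      div_nonneg (by linarith) hs.le
    have hA : 0 ≤ (t+1)^(1-σ)/(1-σ) := div_nonneg (by linarith) hs.le
    nlinarith [hub2]
  · -- upper
    have : u^(1-σ)/(1-σ) - S ≤ t^(1-σ)/(1-σ) := by
      rw [div_sub' (ne_of_gt hs), div_le_div_iff₀ hs hs]
      nlinarith [hsumlb]
    have h2 : t^(1-σ)/(1-σ) ≤ (t+1)^(1-σ)/(1-σ) := by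
      have hr : t^(1-σ) ≤ (t+1)^(1-σ) := Real.rpow_le_rpow htpos.le (by linarith) hs.le
      exact (div_le_div_iff_of_pos_right hs).2 hr
    linarith

lemma aux_intH (σ : ℝ) (h0 : 0 < σ) (h1 : σ < 1/2) :
    IntegrableOn (fun u : ℝ => ((u+1)^(1-σ)/(1-σ) + u^(-σ))^2) (Set.Ioo 0 1) := by
  have hs : (0:ℝ) < 1 - σ := by linarith
  have hσ : IntegrableOn (fun t : ℝ => t^(-σ)) (Set.Ioo 0 1) := by
    have := intervalIntegral.intervalIntegrable_rpow' (a:=0) (b:=1) (r := -σ) (by linarith)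
    rw [intervalIntegrable_iff_integrableOn_Ioc_of_le zero_le_one] at this
    exact this.mono_set Set.Ioo_subset_Ioc_self
  have h2σ : IntegrableOn (fun t : ℝ => t^(-(2*σ))) (Set.Ioo 0 1) := by
    have := intervalIntegral.intervalIntegrable_rpow' (a:=0) (b:=1) (r := -(2*σ)) (by linarith)
    rw [intervalIntegrable_iff_integrableOn_Ioc_of_le zero_le_one] at this
    exact this.mono_set Set.Ioo_subset_Ioc_self
  set C : ℝ := 2/(1-σ) with hC
  have hg : IntegrableOn
      (fun t : ℝ => C^2 + 2*C*t^(-σ) + t^(-(2*σ))) (Set.Ioo 0 1) := by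
    exact ((integrableOn_const measure_Ioo_lt_top.ne).add
      (hσ.const_mul (2*C))).add h2σ
  have hmeas : AEStronglyMeasurable (fun u : ℝ => ((u+1)^(1-σ)/(1-σ) + u^(-σ))^2)
      (volume.restrict (Set.Ioo (0:ℝ) 1)) := by
    apply Measurable.aestronglyMeasurable
    fun_prop
  apply Integrable.mono' hg hmeas
  rw [ae_restrict_iff' measurableSet_Ioo]
  filter_upwards with t ht
  obtain ⟨ht0, ht1⟩ := ht
  have hA : (t+1)^(1-σ)/(1-σ) ≤ C := by
    rw [hC]
    apply (div_le_div_iff_of_pos_right hs).2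
    calc (t+1)^(1-σ) ≤ (2:ℝ)^(1-σ) :=
          Real.rpow_le_rpow (by linarith) (by linarith) (by linarith)
    _ ≤ (2:ℝ)^(1:ℝ) := Real.rpow_le_rpow_of_exponent_le one_le_two (by linarith)
    _ = 2 := Real.rpow_one 2
  have hA0 : 0 ≤ (t+1)^(1-σ)/(1-σ) :=
    div_nonneg (Real.rpow_nonneg (by linarith) _) hs.le
  have hB0 : 0 ≤ t^(-σ) := Real.rpow_nonneg ht0.le _
  have hB2 : (t^(-σ))^2 = t^(-(2*σ)) := by
    rw [← Real.rpow_natCast (t^(-σ)) 2, ← Real.rpow_mul ht0.le]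
    norm_num
    ring_nf
  rw [Real.norm_eq_abs, abs_of_nonneg (by positivity)]
  nlinarith [hB2, sq_nonneg (t^(-σ))]


theorem stmt8 (σ₁ : ℝ) (h0 : 0 < σ₁) (h1 : σ₁ < 1/2) (k : ℕ) (hk : 1 ≤ k) :
    (∫ u in Set.Ioc (k : ℝ) (k+1),
        (u^(1-σ₁)/(1-σ₁) - ∑ n ∈ Finset.Icc 1 k, (u - (n:ℝ))^(-σ₁))^2)
      ≤ (∫ u in Set.Ioo (0:ℝ) 1, ((u+1)^(1-σ₁)/(1-σ₁) + u^(-σ₁))^2)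
    ∧ IntegrableOn (fun u : ℝ => ((u+1)^(1-σ₁)/(1-σ₁) + u^(-σ₁))^2) (Set.Ioo 0 1) := by
  have h1' : σ₁ < 1 := by linarith
  have hs : (0:ℝ) < 1 - σ₁ := by linarith
  set H : ℝ → ℝ := fun t => ((t+1)^(1-σ₁)/(1-σ₁) + t^(-σ₁))^2 with hHdef
  have hH : IntegrableOn H (Set.Ioo 0 1) := aux_intH σ₁ h0 h1
  refine ⟨?_, hH⟩
  have hHIoc : IntegrableOn H (Set.Ioc 0 1) := by
    rw [integrableOn_Ioc_iff_integrableOn_Ioo]; exact hH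
  have hHshift : IntegrableOn (fun u => H (u - k)) (Set.Ioc (k:ℝ) ((k:ℝ)+1)) := by
    have h2 := ((intervalIntegrable_iff_integrableOn_Ioc_of_le zero_le_one).2
      hHIoc).comp_sub_right (k:ℝ)
    rw [zero_add, add_comm 1 (k:ℝ)] at h2
    exact (intervalIntegrable_iff_integrableOn_Ioc_of_le (by linarith)).1 h2
  have key : ∫ u in Set.Ioc (k:ℝ) ((k:ℝ)+1), H (u - k) = ∫ t in Set.Ioo (0:ℝ) 1, H t := by
    rw [← intervalIntegral.integral_of_le (by linarith : (k:ℝ) ≤ (k:ℝ)+1)]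
    rw [intervalIntegral.integral_comp_sub_right H (k:ℝ)]
    rw [sub_self, show (k:ℝ)+1-(k:ℝ) = 1 by ring]
    rw [intervalIntegral.integral_of_le zero_le_one, integral_Ioc_eq_integral_Ioo]
  calc ∫ u in Set.Ioc (k:ℝ) ((k:ℝ)+1),
        (u^(1-σ₁)/(1-σ₁) - ∑ n ∈ Finset.Icc 1 k, (u-(n:ℝ))^(-σ₁))^2
      ≤ ∫ u in Set.Ioc (k:ℝ) ((k:ℝ)+1), H (u - k) := by
        apply integral_mono_of_nonneg
        · exact Filter.Eventually.of_forall fun u => sq_nonneg _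
        · exact hHshift
        · refine (ae_restrict_iff' measurableSet_Ioc).2 ?_
          filter_upwards with u hu
          simpa [hHdef] using aux_ptwise σ₁ h0 h1' k hk u hu
  _ = _ := key
end

section
/- Let 0 < σ₁ < 1/2 and r > σ₁ with r ≠ 1. Define ψ(u) = u/(1−σ₁) − ∑_{n<u} (1−n/u)^{−σ₁}. Then ∫_1^∞ |ψ(u)|² u^{−1−2r} du ≤ C(σ₁) ζ(1 + 2(r−σ₁)), where C(σ₁) = 2^{3−2σ₁}/((3−2σ₁)(1−σ₁)²) + 2^{2−σ₁}/(1−σ₁)² + 1/(1−2σ₁). -/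
open MeasureTheory

lemma rpow_mvt {p a b : ℝ} (hp0 : 0 < p) (hp1 : p ≤ 1) (ha : 0 < a) (hab : a < b) :
    p * b ^ (p - 1) * (b - a) ≤ b ^ p - a ^ p ∧ b ^ p - a ^ p ≤ p * a ^ (p - 1) * (b - a) := by
  obtain ⟨c, hc, hc'⟩ := exists_hasDerivAt_eq_slope (fun x : ℝ => x ^ p)
    (fun x => p * x ^ (p - 1)) hab
    (by
      intro x hx
      exact (Real.continuousAt_rpow_const x p
        (Or.inl (ne_of_gt (lt_of_lt_of_le ha hx.1)))).continuousWithinAt)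
    (fun x hx => by
      simpa [mul_comm] using Real.hasDerivAt_rpow_const (x := x) (p := p)
        (Or.inl (ne_of_gt (lt_trans ha hx.1))))
  have hba : (0:ℝ) < b - a := by linarith
  have heq : b ^ p - a ^ p = p * c ^ (p - 1) * (b - a) := by
    rw [hc']; field_simp
  have h1 : c ^ (p - 1) ≤ a ^ (p - 1) :=
    Real.rpow_le_rpow_of_nonpos ha hc.1.le (by linarith)
  have h2 : b ^ (p - 1) ≤ c ^ (p - 1) :=
    Real.rpow_le_rpow_of_nonpos (lt_trans ha hc.1) hc.2.le (by linarith)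
  constructor <;> rw [heq] <;> gcongr

set_option maxHeartbeats 1000000 in
lemma pointwise_bound {σ₁ r : ℝ} (h0 : 0 < σ₁) (h1 : σ₁ < 1/2) (hr : σ₁ < r) (k : ℕ) (u : ℝ)
    (hu1 : (k:ℝ)+1 < u) (hu2 : u ≤ (k:ℝ)+2) :
    (u/(1-σ₁) - ∑ n ∈ Finset.Ico 1 ⌈u⌉₊, (1 - (n:ℝ)/u)^(-σ₁))^2 * u^(-1-2*r)
      ≤ ((k:ℝ)+1)^(-(1+2*(r-σ₁)))
          * ((u-((k:ℝ)+1))^(1-σ₁)/(1-σ₁) + (u-((k:ℝ)+1))^(-σ₁))^2 := by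
  have hp0 : (0:ℝ) < 1 - σ₁ := by linarith
  have hk0 : (0:ℝ) < (k:ℝ)+1 := by positivity
  have hu0 : (0:ℝ) < u := by linarith
  set p : ℝ := 1 - σ₁ with hp
  set t : ℝ := u - ((k:ℝ)+1) with htdef
  have ht0 : 0 < t := by simp [htdef]; linarith
  have ht1 : t ≤ 1 := by simp [htdef]; linarith
  -- ceiling
  have hceil : ⌈u⌉₊ = k + 2 := by
    rw [Nat.ceil_eq_iff (by omega)]
    constructor <;> push_cast <;> [skip; skip] <;> push_cast <;> linarith
  -- sum transformation
  set S : ℝ := ∑ n ∈ Finset.Ico 1 (k+2), (u - (n:ℝ))^(-σ₁) with hSdef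
  have hun : ∀ n ∈ Finset.Ico 1 (k+2), (0:ℝ) < u - (n:ℝ) := by
    intro n hn
    rw [Finset.mem_Ico] at hn
    have : (n:ℝ) ≤ (k:ℝ)+1 := by exact_mod_cast Nat.lt_succ_iff.mp hn.2
    linarith
  have hS : ∑ n ∈ Finset.Ico 1 ⌈u⌉₊, (1 - (n:ℝ)/u)^(-σ₁) = u^σ₁ * S := by
    rw [hceil, hSdef, Finset.mul_sum]
    refine Finset.sum_congr rfl fun n hn => ?_
    have h := hun n hn
    have : 1 - (n:ℝ)/u = (u - n)/u := by field_simp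
    rw [this, Real.div_rpow h.le hu0.le, Real.rpow_neg hu0.le σ₁]
    field_simp
  
  -- telescoping identities
  have htel1 : ∑ i ∈ Finset.range (k+1), ((u - (i:ℝ))^p/p - (u - ((i:ℝ)+1))^p/p)
      = u^p/p - (u-((k:ℝ)+1))^p/p := by
    have h := Finset.sum_range_sub' (fun j : ℕ => (u - (j:ℝ))^p/p) (k+1)
    push_cast at h
    convert h using 1
    norm_num
  have hrw : S = ∑ i ∈ Finset.range (k+1), (u - ((i:ℝ)+1))^(-σ₁) := by
    rw [hSdef, Finset.sum_Ico_eq_sum_range]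
    norm_num
    refine Finset.sum_congr rfl fun i hi => ?_
    push_cast
    ring_nf
  have hpm : p - 1 = -σ₁ := by rw [hp]; ring
  -- lower bound for S
  have hSlo : u^p/p - t^p/p ≤ S := by
    rw [hrw]
    have := htel1
    rw [← htdef] at this
    rw [← this]
    refine Finset.sum_le_sum fun i hi => ?_
    rw [Finset.mem_range] at hi
    have hia : (0:ℝ) < u - ((i:ℝ)+1) := by
      have : (i:ℝ) + 1 ≤ (k:ℝ) + 1 := by
        have : (i:ℝ) ≤ (k:ℝ) := by exact_mod_cast Nat.lt_succ_iff.mp hi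
        linarith
      linarith
    have h2 := (rpow_mvt hp0 (by rw [hp]; linarith) hia
      (by linarith : u - ((i:ℝ)+1) < u - (i:ℝ))).2
    rw [hpm] at h2
    rw [div_sub_div_same, div_le_iff₀ hp0]
    nlinarith
  -- upper bound for S
  have hShi : S ≤ t^(-σ₁) + u^p/p := by
    have hsplit : S = (∑ n ∈ Finset.Ico 1 (k+1), (u-(n:ℝ))^(-σ₁)) + (u - ((k:ℝ)+1))^(-σ₁) := by
      rw [hSdef, Finset.sum_Ico_succ_top (by omega : 1 ≤ k+1)]
      push_cast
      ring_nf
    have htel2 : ∑ i ∈ Finset.range k, ((u - 1 - (i:ℝ))^p/p - (u - 1 - ((i:ℝ)+1))^p/p)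
        = (u-1)^p/p - (u-1-(k:ℝ))^p/p := by
      have h := Finset.sum_range_sub' (fun j : ℕ => (u - 1 - (j:ℝ))^p/p) k
      push_cast at h
      convert h using 1
      norm_num
    have hrw2 : ∑ n ∈ Finset.Ico 1 (k+1), (u-(n:ℝ))^(-σ₁)
        = ∑ i ∈ Finset.range k, (u - 1 - (i:ℝ))^(-σ₁) := by
      rw [Finset.sum_Ico_eq_sum_range]
      norm_num
      refine Finset.sum_congr rfl fun i hi => ?_
      push_cast
      ring_nf
    have hbound : ∑ n ∈ Finset.Ico 1 (k+1), (u-(n:ℝ))^(-σ₁)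
        ≤ (u-1)^p/p - (u-1-(k:ℝ))^p/p := by
      rw [hrw2, ← htel2]
      refine Finset.sum_le_sum fun i hi => ?_
      rw [Finset.mem_range] at hi
      have hia : (0:ℝ) < u - 1 - ((i:ℝ)+1) := by
        have : (i:ℝ) + 1 ≤ (k:ℝ) := by exact_mod_cast Nat.succ_le_of_lt hi
        linarith
      have h2 := (rpow_mvt hp0 (by rw [hp]; linarith) hia
        (by linarith : u - 1 - ((i:ℝ)+1) < u - 1 - (i:ℝ))).1
      rw [hpm] at h2
      rw [div_sub_div_same, le_div_iff₀ hp0]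
      nlinarith
    have h1 : (u-1)^p ≤ u^p := Real.rpow_le_rpow (by linarith) (by linarith) hp0.le
    have h2 : (0:ℝ) ≤ (u-1-(k:ℝ))^p := Real.rpow_nonneg (by linarith) p
    have h4 : (0:ℝ) ≤ (u - ((k:ℝ)+1))^(-σ₁) := Real.rpow_nonneg (by linarith) _
    have h5 : (u-1)^p/p - (u-1-(k:ℝ))^p/p ≤ u^p/p := by
      rw [div_sub_div_same, div_le_div_iff₀ hp0 hp0]
      nlinarith
    rw [hsplit, htdef]
    linarith
  -- assemble
  have hphi_hi : u^p/p - S ≤ t^p/p := by linarith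
  have htn0 : (0:ℝ) ≤ t^(-σ₁) := Real.rpow_nonneg ht0.le _
  have htp0 : (0:ℝ) ≤ t^p/p := by positivity
  have hphi_lo : -(t^p/p + t^(-σ₁)) ≤ u^p/p - S := by linarith
  have hsq : (u^p/p - S)^2 ≤ (t^p/p + t^(-σ₁))^2 :=
    sq_le_sq' hphi_lo (by linarith)
  rw [hS]
  have hfactor : u/p - u^σ₁ * S = u^σ₁ * (u^p/p - S) := by
    have hh : u^σ₁ * u^p = u := by
      rw [← Real.rpow_add hu0, show σ₁ + p = 1 by rw [hp]; ring, Real.rpow_one]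
    linear_combination -hh / p
  rw [hfactor]
  have hpow : (u^σ₁)^2 * u^(-1-2*r) = u^(-(1+2*(r-σ₁))) := by
    rw [sq, ← Real.rpow_add hu0, ← Real.rpow_add hu0]
    congr 1
    ring
  calc (u^σ₁ * (u^p/p - S))^2 * u^(-1-2*r)
      = (u^p/p - S)^2 * ((u^σ₁)^2 * u^(-1-2*r)) := by ring
    _ = (u^p/p - S)^2 * u^(-(1+2*(r-σ₁))) := by rw [hpow]
    _ ≤ (t^p/p + t^(-σ₁))^2 * ((k:ℝ)+1)^(-(1+2*(r-σ₁))) := by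
        apply mul_le_mul hsq (Real.rpow_le_rpow_of_nonpos hk0 hu1.le (by linarith))
          (Real.rpow_nonneg hu0.le _) (sq_nonneg _)
    _ = ((k:ℝ)+1)^(-(1+2*(r-σ₁))) * (t^p/p + t^(-σ₁))^2 := by ring


lemma g_eq {σ₁ : ℝ} (h0 : 0 < σ₁) (h1 : σ₁ < 1/2) :
    ∀ t ∈ Set.Icc (0:ℝ) 1, (t^(1-σ₁)/(1-σ₁) + t^(-σ₁))^2
      = t^(2-2*σ₁)/(1-σ₁)^2 + 2*t^(1-2*σ₁)/(1-σ₁) + t^(-(2*σ₁)) := by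
  intro t ht
  rcases eq_or_lt_of_le ht.1 with h | h
  · rw [← h]
    rw [Real.zero_rpow (show (1-σ₁) ≠ 0 by intro hh; rw [sub_eq_zero] at hh; linarith [hh.symm]; ),
      Real.zero_rpow (show (-σ₁) ≠ 0 by simp; linarith),
      Real.zero_rpow (show (2-2*σ₁) ≠ 0 by intro hh; nlinarith [hh]),
      Real.zero_rpow (show (1-2*σ₁) ≠ 0 by intro hh; nlinarith [hh]),
      Real.zero_rpow (show (-(2*σ₁)) ≠ 0 by simp; linarith)]
    ring
  · have e1 : t^(1-σ₁) * t^(1-σ₁) = t^(2-2*σ₁) := by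
      rw [← Real.rpow_add h]; ring_nf
    have e2 : t^(1-σ₁) * t^(-σ₁) = t^(1-2*σ₁) := by
      rw [← Real.rpow_add h]; ring_nf
    have e3 : t^(-σ₁) * t^(-σ₁) = t^(-(2*σ₁)) := by
      rw [← Real.rpow_add h]; ring_nf
    have hne : (1:ℝ)-σ₁ ≠ 0 := by intro hh; rw [sub_eq_zero] at hh; linarith [hh.symm]
    rw [← e1, ← e2, ← e3]
    field_simp
    ring

lemma e_intable {σ₁ : ℝ} (h0 : 0 < σ₁) (h1 : σ₁ < 1/2) :
    IntervalIntegrable (fun t : ℝ => t^(2-2*σ₁)/(1-σ₁)^2 + 2*t^(1-2*σ₁)/(1-σ₁) + t^(-(2*σ₁)))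
      volume 0 1 := by
  apply IntervalIntegrable.add
  apply IntervalIntegrable.add
  · exact (intervalIntegral.intervalIntegrable_rpow' (by linarith)).div_const _
  · have := (intervalIntegral.intervalIntegrable_rpow' (a := 0) (b := 1)
      (r := 1-2*σ₁) (by linarith)).const_mul (2:ℝ)
    exact this.div_const _
  · exact intervalIntegral.intervalIntegrable_rpow' (by linarith)

lemma g_intable {σ₁ : ℝ} (h0 : 0 < σ₁) (h1 : σ₁ < 1/2) :
    IntervalIntegrable (fun t : ℝ => (t^(1-σ₁)/(1-σ₁) + t^(-σ₁))^2) volume 0 1 := by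
  have hIe := e_intable h0 h1
  rw [intervalIntegrable_iff_integrableOn_Ioc_of_le (by norm_num : (0:ℝ) ≤ 1)] at hIe ⊢
  exact hIe.congr ((ae_restrict_iff' measurableSet_Ioc).mpr (Filter.Eventually.of_forall
    fun t ht => (g_eq h0 h1 t ⟨ht.1.le, ht.2⟩).symm))

lemma g_integral_eval {σ₁ : ℝ} (h0 : 0 < σ₁) (h1 : σ₁ < 1/2) :
    ∫ t in (0:ℝ)..1, (t^(1-σ₁)/(1-σ₁) + t^(-σ₁))^2
      = 1/((3-2*σ₁)*(1-σ₁)^2) + 1/(1-σ₁)^2 + 1/(1-2*σ₁) := by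
  have hne : (1:ℝ)-σ₁ ≠ 0 := by intro hh; rw [sub_eq_zero] at hh; linarith [hh.symm]
  rw [intervalIntegral.integral_congr (g := fun t : ℝ =>
      t^(2-2*σ₁)/(1-σ₁)^2 + 2*t^(1-2*σ₁)/(1-σ₁) + t^(-(2*σ₁)))
    (by rw [Set.uIcc_of_le (by norm_num : (0:ℝ) ≤ 1)]; exact g_eq h0 h1)]
  have i1 : IntervalIntegrable (fun t : ℝ => t^(2-2*σ₁)/(1-σ₁)^2) volume 0 1 :=
    (intervalIntegral.intervalIntegrable_rpow' (by linarith)).div_const _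
  have i2 : IntervalIntegrable (fun t : ℝ => 2*t^(1-2*σ₁)/(1-σ₁)) volume 0 1 := by
    have := (intervalIntegral.intervalIntegrable_rpow' (a := 0) (b := 1)
      (r := 1-2*σ₁) (by linarith)).const_mul (2:ℝ)
    exact this.div_const _
  have i3 : IntervalIntegrable (fun t : ℝ => t^(-(2*σ₁))) volume 0 1 :=
    intervalIntegral.intervalIntegrable_rpow' (by linarith)
  rw [intervalIntegral.integral_add (i1.add i2) i3, intervalIntegral.integral_add i1 i2]
  have e1 : ∫ t in (0:ℝ)..1, t^(2-2*σ₁)/(1-σ₁)^2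
      = (1/(3-2*σ₁))/(1-σ₁)^2 := by
    rw [intervalIntegral.integral_div, integral_rpow (Or.inl (by linarith))]
    norm_num
    rw [Real.zero_rpow (by linarith)]
    ring
  have e2 : ∫ t in (0:ℝ)..1, 2*t^(1-2*σ₁)/(1-σ₁)
      = 2*(1/(2-2*σ₁))/(1-σ₁) := by
    rw [intervalIntegral.integral_div]
    rw [show (fun t : ℝ => 2*t^(1-2*σ₁)) = fun t : ℝ => 2*t^(1-2*σ₁) from rfl]
    rw [intervalIntegral.integral_const_mul, integral_rpow (Or.inl (by linarith))]
    norm_num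
    rw [Real.zero_rpow (by linarith)]
    ring
  have e3 : ∫ t in (0:ℝ)..1, t^(-(2*σ₁)) = 1/(1-2*σ₁) := by
    rw [integral_rpow (Or.inl (by linarith))]
    norm_num
    rw [Real.zero_rpow (by linarith)]
    ring
  rw [e1, e2, e3]
  have h2 : (2:ℝ)-2*σ₁ ≠ 0 := by intro hh; nlinarith [hh]
  have h3 : (3:ℝ)-2*σ₁ ≠ 0 := by intro hh; nlinarith [hh]
  field_simp


lemma g_shift_integral {σ₁ : ℝ} (h0 : 0 < σ₁) (h1 : σ₁ < 1/2) (c : ℝ) :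
    ∫ u in Set.Ioc c (c+1), ((u-c)^(1-σ₁)/(1-σ₁) + (u-c)^(-σ₁))^2
      = 1/((3-2*σ₁)*(1-σ₁)^2) + 1/(1-σ₁)^2 + 1/(1-2*σ₁) := by
  rw [← intervalIntegral.integral_of_le (by linarith : c ≤ c + 1)]
  have h := intervalIntegral.integral_comp_sub_right (a := c) (b := c+1)
    (fun t : ℝ => (t^(1-σ₁)/(1-σ₁) + t^(-σ₁))^2) c
  rw [h, sub_self, show c+1-c = (1:ℝ) by ring]
  exact g_integral_eval h0 h1

lemma g_shift_intable {σ₁ : ℝ} (h0 : 0 < σ₁) (h1 : σ₁ < 1/2) (c : ℝ) :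
    IntegrableOn (fun u : ℝ => ((u-c)^(1-σ₁)/(1-σ₁) + (u-c)^(-σ₁))^2)
      (Set.Ioc c (c+1)) volume := by
  have h := (g_intable h0 h1).comp_sub_right c
  rw [zero_add, add_comm 1 c] at h
  exact (intervalIntegrable_iff_integrableOn_Ioc_of_le (by linarith)).mp h

theorem stmt9 (σ₁ r : ℝ) (h0 : 0 < σ₁) (h1 : σ₁ < 1/2) (hr : σ₁ < r) (hr1 : r ≠ 1) :
    (∫ u in Set.Ioi (1:ℝ),
        (u/(1-σ₁) - ∑ n ∈ Finset.Ico 1 ⌈u⌉₊, (1 - (n:ℝ)/u)^(-σ₁))^2 * u^(-1-2*r))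
      ≤ (2^(3-2*σ₁)/((3-2*σ₁)*(1-σ₁)^2) + 2^(2-σ₁)/(1-σ₁)^2 + 1/(1-2*σ₁))
          * ∑' n : ℕ, ((n:ℝ)+1)^(-(1+2*(r-σ₁))) := by
  have hp0 : (0:ℝ) < 1 - σ₁ := by linarith
  have hD1 : (0:ℝ) < (3-2*σ₁)*(1-σ₁)^2 := by nlinarith
  have hD2 : (0:ℝ) < (1-σ₁)^2 := by positivity
  have hD3 : (0:ℝ) < 1-2*σ₁ := by linarith
  set C₀ : ℝ := 1/((3-2*σ₁)*(1-σ₁)^2) + 1/(1-σ₁)^2 + 1/(1-2*σ₁) with hC₀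
  set Cb : ℝ := 2^(3-2*σ₁)/((3-2*σ₁)*(1-σ₁)^2) + 2^(2-σ₁)/(1-σ₁)^2 + 1/(1-2*σ₁) with hCb
  set Z : ℝ := ∑' n : ℕ, ((n:ℝ)+1)^(-(1+2*(r-σ₁))) with hZdef
  have hsum : Summable (fun n : ℕ => ((n:ℝ)+1)^(-(1+2*(r-σ₁)))) := by
    have h := (Real.summable_nat_rpow (p := -(1+2*(r-σ₁)))).mpr (by linarith)
    have h2 := (summable_nat_add_iff 1).mpr h
    simpa using h2
  have hZ0 : 0 ≤ Z := tsum_nonneg fun n => Real.rpow_nonneg (by positivity) _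
  have hC₀0 : 0 ≤ C₀ := by
    rw [hC₀]
    have := le_of_lt (div_pos one_pos hD1)
    have := le_of_lt (div_pos one_pos hD2)
    have := le_of_lt (div_pos one_pos hD3)
    linarith
  have hCge : C₀ ≤ Cb := by
    have h23 : (1:ℝ) ≤ 2^(3-2*σ₁) := by
      calc (1:ℝ) = 2^(0:ℝ) := (Real.rpow_zero 2).symm
        _ ≤ 2^(3-2*σ₁) := Real.rpow_le_rpow_of_exponent_le one_le_two (by linarith)
    have h22 : (1:ℝ) ≤ 2^(2-σ₁) := by
      calc (1:ℝ) = 2^(0:ℝ) := (Real.rpow_zero 2).symm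
        _ ≤ 2^(2-σ₁) := Real.rpow_le_rpow_of_exponent_le one_le_two (by linarith)
    have t1 : 1/((3-2*σ₁)*(1-σ₁)^2) ≤ 2^(3-2*σ₁)/((3-2*σ₁)*(1-σ₁)^2) := by gcongr
    have t2 : 1/(1-σ₁)^2 ≤ 2^(2-σ₁)/(1-σ₁)^2 := by gcongr
    rw [hC₀, hCb]; linarith
  have hRHS0 : (0:ℝ) ≤ Cb * Z := mul_nonneg (le_trans hC₀0 hCge) hZ0
  by_cases hInt : IntegrableOn (fun u : ℝ =>
      (u/(1-σ₁) - ∑ n ∈ Finset.Ico 1 ⌈u⌉₊, (1 - (n:ℝ)/u)^(-σ₁))^2 * u^(-1-2*r))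
      (Set.Ioi 1) volume
  swap
  · rw [integral_undef hInt]; exact hRHS0
  have hnn : 0 ≤ᵐ[volume.restrict (Set.Ioi 1)] fun u : ℝ =>
      (u/(1-σ₁) - ∑ n ∈ Finset.Ico 1 ⌈u⌉₊, (1 - (n:ℝ)/u)^(-σ₁))^2 * u^(-1-2*r) :=
    (ae_restrict_iff' measurableSet_Ioi).mpr (Filter.Eventually.of_forall fun u hu =>
      mul_nonneg (sq_nonneg _) (Real.rpow_nonneg (le_of_lt (lt_trans one_pos hu)) _))
  rw [MeasureTheory.integral_eq_lintegral_of_nonneg_ae hnn hInt.aestronglyMeasurable]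
  apply ENNReal.toReal_le_of_le_ofReal hRHS0
  have hsub : Set.Ioi (1:ℝ) ⊆ ⋃ k : ℕ, Set.Ioc ((k:ℝ)+1) (((k:ℝ)+1)+1) := by
    intro u hu
    have hu1 : (1:ℝ) < u := hu
    have h2 : 1 < ⌈u⌉₊ := by
      rw [Nat.lt_ceil]; exact_mod_cast hu1
    obtain ⟨j, hj⟩ : ∃ j, ⌈u⌉₊ = j + 2 := ⟨⌈u⌉₊ - 2, by omega⟩
    refine Set.mem_iUnion.mpr ⟨j, ?_, ?_⟩
    · have := Nat.lt_ceil.mp (by omega : j + 1 < ⌈u⌉₊)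
      push_cast at this
      linarith
    · have := Nat.le_ceil u
      rw [hj] at this
      push_cast at this
      linarith
  have hterm : ∀ k : ℕ,
      (∫⁻ u in Set.Ioc ((k:ℝ)+1) (((k:ℝ)+1)+1), ENNReal.ofReal
        ((u/(1-σ₁) - ∑ n ∈ Finset.Ico 1 ⌈u⌉₊, (1 - (n:ℝ)/u)^(-σ₁))^2 * u^(-1-2*r)))
      ≤ ENNReal.ofReal (((k:ℝ)+1)^(-(1+2*(r-σ₁))) * C₀) := by
    intro k
    set c : ℝ := (k:ℝ) + 1 with hc
    have hKnn : (0:ℝ) ≤ c^(-(1+2*(r-σ₁))) := Real.rpow_nonneg (by positivity) _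
    have step1 : (∫⁻ u in Set.Ioc c (c+1), ENNReal.ofReal
          ((u/(1-σ₁) - ∑ n ∈ Finset.Ico 1 ⌈u⌉₊, (1 - (n:ℝ)/u)^(-σ₁))^2 * u^(-1-2*r)))
        ≤ ∫⁻ u in Set.Ioc c (c+1), ENNReal.ofReal
            (c^(-(1+2*(r-σ₁))) * (((u-c)^(1-σ₁)/(1-σ₁) + (u-c)^(-σ₁))^2)) := by
      apply setLIntegral_mono (by fun_prop)
      intro u hu
      apply ENNReal.ofReal_le_ofReal
      exact pointwise_bound h0 h1 hr k u hu.1 (by linarith [hu.2])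
    have step2 : (∫⁻ u in Set.Ioc c (c+1), ENNReal.ofReal
          (c^(-(1+2*(r-σ₁))) * (((u-c)^(1-σ₁)/(1-σ₁) + (u-c)^(-σ₁))^2)))
        = ENNReal.ofReal (c^(-(1+2*(r-σ₁))) * C₀) := by
      rw [← MeasureTheory.ofReal_integral_eq_lintegral_ofReal
        ((g_shift_intable h0 h1 c).const_mul _)
        (Filter.Eventually.of_forall fun u => mul_nonneg hKnn (sq_nonneg _))]
      rw [integral_const_mul, g_shift_integral h0 h1 c]
    calc _ ≤ _ := step1
      _ = _ := step2
  calc (∫⁻ u in Set.Ioi (1:ℝ), ENNReal.ofReal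
        ((u/(1-σ₁) - ∑ n ∈ Finset.Ico 1 ⌈u⌉₊, (1 - (n:ℝ)/u)^(-σ₁))^2 * u^(-1-2*r)))
      ≤ ∫⁻ u in ⋃ k : ℕ, Set.Ioc ((k:ℝ)+1) (((k:ℝ)+1)+1), ENNReal.ofReal
          ((u/(1-σ₁) - ∑ n ∈ Finset.Ico 1 ⌈u⌉₊, (1 - (n:ℝ)/u)^(-σ₁))^2 * u^(-1-2*r)) :=
        lintegral_mono_set hsub
    _ ≤ ∑' k : ℕ, ∫⁻ u in Set.Ioc ((k:ℝ)+1) (((k:ℝ)+1)+1), ENNReal.ofReal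
          ((u/(1-σ₁) - ∑ n ∈ Finset.Ico 1 ⌈u⌉₊, (1 - (n:ℝ)/u)^(-σ₁))^2 * u^(-1-2*r)) :=
        lintegral_iUnion_le _ _
    _ ≤ ∑' k : ℕ, ENNReal.ofReal (((k:ℝ)+1)^(-(1+2*(r-σ₁))) * C₀) :=
        ENNReal.tsum_le_tsum hterm
    _ = ∑' k : ℕ, ENNReal.ofReal (((k:ℝ)+1)^(-(1+2*(r-σ₁)))) * ENNReal.ofReal C₀ :=
        tsum_congr fun k => ENNReal.ofReal_mul (Real.rpow_nonneg (by positivity) _)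
    _ = (∑' k : ℕ, ENNReal.ofReal (((k:ℝ)+1)^(-(1+2*(r-σ₁))))) * ENNReal.ofReal C₀ :=
        ENNReal.tsum_mul_right
    _ = ENNReal.ofReal Z * ENNReal.ofReal C₀ := by
        rw [hZdef, ENNReal.ofReal_tsum_of_nonneg (fun n => Real.rpow_nonneg (by positivity) _) hsum]
    _ = ENNReal.ofReal (Z * C₀) := (ENNReal.ofReal_mul hZ0).symm
    _ ≤ ENNReal.ofReal (Cb * Z) := ENNReal.ofReal_le_ofReal (by nlinarith)
end

section
/- Let 0 < σ₁ < 1/2 and define ψ(u) = u/(1−σ₁) − ∑_{n<u} (1−n/u)^{−σ₁} for u > 1. If ∫_1^∞ |ψ(u)|² u^{−1−2r} du < ∞ for some r > 0 with r ≠ 1, then r > σ₁. -/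
open MeasureTheory

/-- Bernoulli-type bound: `(a+1)^p ≤ a^p + p * a^(p-1)` for `0 < a`, `0 ≤ p ≤ 1`. -/
private lemma bern_aux {a p : ℝ} (ha : 0 < a) (hp0 : 0 ≤ p) (hp1 : p ≤ 1) :
    (a + 1) ^ p ≤ a ^ p + p * a ^ (p - 1) := by
  have h1 : a + 1 = a * (1 + 1 / a) := by field_simp
  have h2 : (a + 1) ^ p = a ^ p * (1 + 1 / a) ^ p := by
    rw [h1, Real.mul_rpow ha.le (by positivity)]
  have h3 : (1 + 1 / a) ^ p ≤ 1 + p * (1 / a) := by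
    have hge : (-1:ℝ) ≤ 1 / a := by
      have : (0:ℝ) ≤ 1 / a := by positivity
      linarith
    have := rpow_one_add_le_one_add_mul_self (s := 1 / a) hge hp0 hp1
    simpa using this
  have h4 : a ^ p * (1 + p * (1 / a)) = a ^ p + p * a ^ (p - 1) := by
    rw [Real.rpow_sub ha, Real.rpow_one]
    field_simp
  calc (a + 1) ^ p = a ^ p * (1 + 1 / a) ^ p := h2
    _ ≤ a ^ p * (1 + p * (1 / a)) := by
        have : (0:ℝ) ≤ a ^ p := (Real.rpow_pos_of_pos ha p).le
        exact mul_le_mul_of_nonneg_left h3 this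
    _ = a ^ p + p * a ^ (p - 1) := h4

/-- Telescoping lower bound for the singular sum. -/
private lemma sum_lb {σ₁ : ℝ} (h0 : 0 < σ₁) (h1 : σ₁ < 1) :
    ∀ (m : ℕ) (u : ℝ), (m : ℝ) < u →
      (u ^ (1 - σ₁) - (u - m) ^ (1 - σ₁)) / (1 - σ₁) ≤
        ∑ n ∈ Finset.Ico 1 (m + 1), (u - (n : ℝ)) ^ (-σ₁) := by
  intro m
  induction m with
  | zero => intro u hu; simp
  | succ m ih =>
    intro u hu
    have hm : (m : ℝ) < u := by push_cast at hu ⊢; linarith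
    have hσ : (0:ℝ) < 1 - σ₁ := by linarith
    rw [Finset.sum_Ico_succ_top (by omega)]
    have key : (u - (m:ℝ)) ^ (1 - σ₁) ≤ (u - ((m:ℝ) + 1)) ^ (1 - σ₁)
        + (1 - σ₁) * (u - ((m:ℝ) + 1)) ^ (-σ₁) := by
      have ha : (0:ℝ) < u - ((m:ℝ) + 1) := by push_cast at hu; linarith
      have hb := bern_aux (a := u - ((m:ℝ) + 1)) (p := 1 - σ₁) ha hσ.le (by linarith)
      have heq : u - ((m:ℝ) + 1) + 1 = u - m := by ring
      rw [heq] at hb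
      have hexp : (1 - σ₁ - 1) = -σ₁ := by ring
      rw [hexp] at hb
      linarith
    have ihu := ih u hm
    have hgoal : (u ^ (1 - σ₁) - (u - ((m+1:ℕ):ℝ)) ^ (1 - σ₁)) / (1 - σ₁) ≤
        (u ^ (1 - σ₁) - (u - (m:ℝ)) ^ (1 - σ₁)) / (1 - σ₁) + (u - ((m + 1 : ℕ):ℝ)) ^ (-σ₁) := by
      rw [div_add' _ _ _ hσ.ne', div_le_div_iff_of_pos_right hσ]
      push_cast at key ⊢
      nlinarith [key]
    calc (u ^ (1 - σ₁) - (u - ((m+1:ℕ):ℝ)) ^ (1 - σ₁)) / (1 - σ₁)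
        ≤ (u ^ (1 - σ₁) - (u - (m:ℝ)) ^ (1 - σ₁)) / (1 - σ₁) + (u - ((m + 1 : ℕ):ℝ)) ^ (-σ₁) :=
          hgoal
      _ ≤ (∑ n ∈ Finset.Ico 1 (m + 1), (u - (n : ℝ)) ^ (-σ₁)) + (u - ((m + 1 : ℕ):ℝ)) ^ (-σ₁) := by
          linarith

/-- Pointwise lower bound for the integrand on `(j+1, j+1+δ]`, assuming `r ≤ σ₁`. -/
private lemma pointwise_lb {σ₁ r δ : ℝ} (h0 : 0 < σ₁) (h1 : σ₁ < 1) (hrr : 0 < r)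
    (hle : r ≤ σ₁) (hδ0 : 0 < δ) (hδ1 : δ < 1) (hδ : 1 + 2 / (1 - σ₁) ≤ δ ^ (-σ₁))
    (j : ℕ) (u : ℝ) (hu1 : (j : ℝ) + 1 < u) (hu2 : u ≤ (j : ℝ) + 1 + δ) :
    ((j : ℝ) + 2)⁻¹ ≤
      (u / (1 - σ₁) - ∑ n ∈ Finset.Ico 1 ⌈u⌉₊, (1 - (n : ℝ) / u) ^ (-σ₁)) ^ 2 *
        u ^ (-1 - 2 * r) := by
  have hσ : (0:ℝ) < 1 - σ₁ := by linarith
  have hj1 : (1:ℝ) ≤ (j : ℝ) + 1 := by have := Nat.cast_nonneg (α := ℝ) j; linarith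
  have hu0 : (0:ℝ) < u := by linarith
  have hu1' : (1:ℝ) ≤ u := by linarith
  have hceil : ⌈u⌉₊ = j + 2 := by
    rw [Nat.ceil_eq_iff (by omega)]
    constructor
    · push_cast; linarith
    · push_cast; linarith
  rw [hceil]
  -- rewrite each term
  have hterm : ∀ n ∈ Finset.Ico 1 (j + 2), (1 - (n : ℝ) / u) ^ (-σ₁)
      = u ^ σ₁ * (u - (n : ℝ)) ^ (-σ₁) := by
    intro n hn
    obtain ⟨hn1, hn2⟩ := Finset.mem_Ico.1 hn
    have hnu : (n : ℝ) < u := by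
      have : (n : ℝ) ≤ (j : ℝ) + 1 := by exact_mod_cast Nat.lt_succ_iff.mp hn2
      linarith
    have hun : (0:ℝ) < u - n := by linarith
    have h5 : 1 - (n : ℝ) / u = (u - n) / u := by field_simp
    rw [h5, Real.div_rpow hun.le hu0.le, Real.rpow_neg hu0.le σ₁, div_inv_eq_mul, mul_comm]
  rw [Finset.sum_congr rfl hterm, ← Finset.mul_sum]
  -- split off the top term and apply the telescoping bound
  have hsplit : ∑ n ∈ Finset.Ico 1 (j + 2), (u - (n : ℝ)) ^ (-σ₁)
      = (∑ n ∈ Finset.Ico 1 (j + 1), (u - (n : ℝ)) ^ (-σ₁)) + (u - ((j+1 : ℕ) : ℝ)) ^ (-σ₁) := by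
    exact Finset.sum_Ico_succ_top (by omega) _
  have hjlt : ((j : ℕ) : ℝ) < u := by linarith
  have htel := sum_lb h0 h1 j u hjlt
  have hP : (0:ℝ) < u ^ σ₁ := Real.rpow_pos_of_pos hu0 σ₁
  have hPu : u ^ σ₁ * u ^ (1 - σ₁) = u := by
    rw [← Real.rpow_add hu0]; norm_num
  -- bound (u - j)^(1-σ₁) ≤ 2
  have hB : (u - (j : ℝ)) ^ (1 - σ₁) ≤ 2 := by
    have h2a : (u - (j : ℝ)) ^ (1 - σ₁) ≤ (2:ℝ) ^ (1 - σ₁) :=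
      Real.rpow_le_rpow (by linarith) (by linarith) (by linarith)
    have h2b : (2:ℝ) ^ (1 - σ₁) ≤ (2:ℝ) ^ (1:ℝ) :=
      Real.rpow_le_rpow_of_exponent_le one_le_two (by linarith)
    rw [Real.rpow_one] at h2b; linarith
  -- bound δ^(-σ₁) ≤ (u - (j+1))^(-σ₁)
  have hA : δ ^ (-σ₁) ≤ (u - ((j : ℝ) + 1)) ^ (-σ₁) := by
    have ha0 : (0:ℝ) < u - ((j : ℝ) + 1) := by linarith
    have hale : u - ((j : ℝ) + 1) ≤ δ := by linarith
    rw [Real.rpow_neg ha0.le, Real.rpow_neg hδ0.le]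
    have h6 : (u - ((j : ℝ) + 1)) ^ σ₁ ≤ δ ^ σ₁ := Real.rpow_le_rpow ha0.le hale h0.le
    exact inv_anti₀ (Real.rpow_pos_of_pos ha0 σ₁) h6
  -- main estimate : ψ ≤ -u^σ₁
  have hψ : u / (1 - σ₁) - u ^ σ₁ * ∑ n ∈ Finset.Ico 1 (j + 2), (u - (n : ℝ)) ^ (-σ₁)
      ≤ -(u ^ σ₁) := by
    have hsum_lb : (u ^ (1 - σ₁) - (u - (j : ℝ)) ^ (1 - σ₁)) / (1 - σ₁)
        + (u - ((j : ℝ) + 1)) ^ (-σ₁)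
        ≤ ∑ n ∈ Finset.Ico 1 (j + 2), (u - (n : ℝ)) ^ (-σ₁) := by
      rw [hsplit]; push_cast; push_cast at htel; linarith
    have hmul := mul_le_mul_of_nonneg_left hsum_lb hP.le
    have hexp : u ^ σ₁ * ((u ^ (1 - σ₁) - (u - (j : ℝ)) ^ (1 - σ₁)) / (1 - σ₁)
        + (u - ((j : ℝ) + 1)) ^ (-σ₁))
        = u / (1 - σ₁) - u ^ σ₁ * (u - (j : ℝ)) ^ (1 - σ₁) / (1 - σ₁)
          + u ^ σ₁ * (u - ((j : ℝ) + 1)) ^ (-σ₁) := by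
      field_simp
      ring_nf
      nlinarith [hPu]
    rw [hexp] at hmul
    -- from hmul : u/(1-σ₁) - B-term + A-term ≤ S-term
    -- goal : u/(1-σ₁) - S-term ≤ -u^σ₁, enough: u^σ₁*A - u^σ₁*B/(1-σ₁) ≥ u^σ₁
    have hAB : u ^ σ₁ * (u - ((j : ℝ) + 1)) ^ (-σ₁)
        - u ^ σ₁ * (u - (j : ℝ)) ^ (1 - σ₁) / (1 - σ₁) ≥ u ^ σ₁ := by
      have hAm : u ^ σ₁ * δ ^ (-σ₁) ≤ u ^ σ₁ * (u - ((j : ℝ) + 1)) ^ (-σ₁) :=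
        mul_le_mul_of_nonneg_left hA hP.le
      have hBm : u ^ σ₁ * (u - (j : ℝ)) ^ (1 - σ₁) / (1 - σ₁) ≤ u ^ σ₁ * 2 / (1 - σ₁) := by
        have hmm : u ^ σ₁ * (u - (j : ℝ)) ^ (1 - σ₁) ≤ u ^ σ₁ * 2 :=
          mul_le_mul_of_nonneg_left hB hP.le
        exact (div_le_div_iff_of_pos_right hσ).2 hmm
      have hδm : u ^ σ₁ * (1 + 2 / (1 - σ₁)) ≤ u ^ σ₁ * δ ^ (-σ₁) :=
        mul_le_mul_of_nonneg_left hδ hP.le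
      have hexpand : u ^ σ₁ * (1 + 2 / (1 - σ₁)) = u ^ σ₁ + u ^ σ₁ * 2 / (1 - σ₁) := by
        field_simp
      rw [hexpand] at hδm
      linarith
    linarith
  -- now finish: ψ² ≥ u^(2σ₁) ≥ u^(2r); integrand ≥ u^(-1) ≥ 1/(j+2)
  set ψ := u / (1 - σ₁) - u ^ σ₁ * ∑ n ∈ Finset.Ico 1 (j + 2), (u - (n : ℝ)) ^ (-σ₁) with hψdef
  have hsq : (u ^ σ₁) ^ 2 ≤ ψ ^ 2 := by nlinarith [hψ, hP]
  have hsq' : u ^ (2 * σ₁) ≤ ψ ^ 2 := by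
    have : (u ^ σ₁) ^ 2 = u ^ (2 * σ₁) := by
      rw [← Real.rpow_natCast (u ^ σ₁) 2, ← Real.rpow_mul hu0.le]
      norm_num; ring_nf
    linarith [hsq, this.symm.le]
  have hr2 : u ^ (2 * r) ≤ u ^ (2 * σ₁) :=
    Real.rpow_le_rpow_of_exponent_le hu1' (by linarith)
  have hpow : (0:ℝ) ≤ u ^ (-1 - 2 * r) := (Real.rpow_pos_of_pos hu0 _).le
  have hchain : u ^ (2 * r) * u ^ (-1 - 2 * r) ≤ ψ ^ 2 * u ^ (-1 - 2 * r) :=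
    mul_le_mul_of_nonneg_right (le_trans hr2 hsq') hpow
  have heq2 : u ^ (2 * r) * u ^ (-1 - 2 * r) = u⁻¹ := by
    rw [← Real.rpow_add hu0]
    have : 2 * r + (-1 - 2 * r) = -1 := by ring
    rw [this, Real.rpow_neg_one]
  have hfin : ((j : ℝ) + 2)⁻¹ ≤ u⁻¹ := by
    apply inv_anti₀ hu0; linarith
  calc ((j : ℝ) + 2)⁻¹ ≤ u⁻¹ := hfin
    _ = u ^ (2 * r) * u ^ (-1 - 2 * r) := heq2.symm
    _ ≤ ψ ^ 2 * u ^ (-1 - 2 * r) := hchain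

theorem stmt10 (σ₁ r : ℝ) (h0 : 0 < σ₁) (h1 : σ₁ < 1/2) (hr : 0 < r) (hr1 : r ≠ 1)
    (hint : IntegrableOn
      (fun u : ℝ => (u/(1-σ₁) - ∑ n ∈ Finset.Ico 1 ⌈u⌉₊, (1 - (n:ℝ)/u)^(-σ₁))^2 * u^(-1-2*r))
      (Set.Ioi 1)) :
    σ₁ < r := by
  by_contra hcon
  push_neg at hcon
  have h1' : σ₁ < 1 := by linarith
  have hσ : (0:ℝ) < 1 - σ₁ := by linarith
  -- choose δ
  set b : ℝ := 1 + 2 / (1 - σ₁) with hbdef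
  have hb1 : (1:ℝ) < b := by
    have : (0:ℝ) < 2 / (1 - σ₁) := by positivity
    simp [hbdef]; linarith
  set δ : ℝ := b ^ (-(1 / σ₁)) with hδdef
  have hδ0 : 0 < δ := Real.rpow_pos_of_pos (by linarith) _
  have hδ1 : δ < 1 := Real.rpow_lt_one_of_one_lt_of_neg hb1
    (by have : (0:ℝ) < 1/σ₁ := by positivity
        linarith)
  have hδb : b ≤ δ ^ (-σ₁) := by
    have h7 : δ ^ (-σ₁) = b := by
      rw [hδdef, ← Real.rpow_mul (by linarith : (0:ℝ) ≤ b)]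
      have h8 : -(1/σ₁) * -σ₁ = 1 := by field_simp
      rw [h8, Real.rpow_one]
    rw [h7]
  set f : ℝ → ℝ :=
    fun u : ℝ => (u/(1-σ₁) - ∑ n ∈ Finset.Ico 1 ⌈u⌉₊, (1 - (n:ℝ)/u)^(-σ₁))^2 * u^(-1-2*r)
    with hfdef
  have hf0 : ∀ u ∈ Set.Ioi (1:ℝ), 0 ≤ f u := by
    intro u hu
    have hu0 : (0:ℝ) < u := lt_trans one_pos hu
    have := (Real.rpow_pos_of_pos hu0 (-1-2*r)).le
    positivity
  -- the intervals
  set s : ℕ → Set ℝ := fun j => Set.Ioc ((j:ℝ)+1) ((j:ℝ)+1+δ) with hsdef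
  have hs_sub : ∀ j, s j ⊆ Set.Ioi (1:ℝ) := by
    intro j x hx
    simp only [hsdef, Set.mem_Ioc] at hx
    have : (1:ℝ) ≤ (j:ℝ)+1 := by have := Nat.cast_nonneg (α := ℝ) j; linarith
    exact lt_of_le_of_lt this hx.1
  have hs_meas : ∀ j : ℕ, MeasurableSet (s j) := fun j => measurableSet_Ioc
  have hs_int : ∀ j : ℕ, IntegrableOn f (s j) := fun j => hint.mono_set (hs_sub j)
  have hs_vol : ∀ j : ℕ, (volume (s j)).toReal = δ := by
    intro j
    simp only [hsdef, Real.volume_Ioc]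
    rw [ENNReal.toReal_ofReal (by linarith)]
    ring
  -- lower bound on each interval
  have hlow : ∀ j : ℕ, ((j:ℝ)+2)⁻¹ * δ ≤ ∫ x in s j, f x := by
    intro j
    have := setIntegral_ge_of_const_le (μ := volume) (f := f) (s := s j)
      (c := ((j:ℝ)+2)⁻¹) (hs_meas j) (measure_Ioc_lt_top.ne)
      (fun x hx => by
        simp only [hsdef, Set.mem_Ioc] at hx
        exact pointwise_lb h0 h1' hr hcon hδ0 hδ1 hδb j x hx.1 hx.2)
      (hs_int j)
    rw [measureReal_def, hs_vol j, smul_eq_mul, mul_comm] at this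
    exact this
  -- disjointness
  have hdisj : ∀ (K : ℕ), (↑(Finset.range K) : Set ℕ).Pairwise (Function.onFun Disjoint s) := by
    intro K i _ j' _ hij
    apply Set.Ioc_disjoint_Ioc.2
    rcases lt_or_gt_of_ne hij with h | h
    · have : (i:ℝ) + 1 + δ ≤ (j':ℝ) + 1 := by
        have : (i:ℝ) + 1 ≤ (j':ℝ) := by exact_mod_cast h
        linarith
      calc min ((i:ℝ)+1+δ) ((j':ℝ)+1+δ) ≤ (i:ℝ)+1+δ := min_le_left _ _
        _ ≤ (j':ℝ)+1 := this
        _ ≤ max ((i:ℝ)+1) ((j':ℝ)+1) := le_max_right _ _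
    · have : (j':ℝ) + 1 + δ ≤ (i:ℝ) + 1 := by
        have : (j':ℝ) + 1 ≤ (i:ℝ) := by exact_mod_cast h
        linarith
      calc min ((i:ℝ)+1+δ) ((j':ℝ)+1+δ) ≤ (j':ℝ)+1+δ := min_le_right _ _
        _ ≤ (i:ℝ)+1 := this
        _ ≤ max ((i:ℝ)+1) ((j':ℝ)+1) := le_max_left _ _
  -- partial sums bounded by the full integral
  have hbound : ∀ K : ℕ, ∑ j ∈ Finset.range K, ((j:ℝ)+2)⁻¹ * δ ≤ ∫ x in Set.Ioi (1:ℝ), f x := by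
    intro K
    have hsum : ∑ j ∈ Finset.range K, ∫ x in s j, f x
        = ∫ x in (⋃ j ∈ Finset.range K, s j), f x := by
      exact (integral_biUnion_finset (Finset.range K) (fun j _ => hs_meas j) (hdisj K)
        (fun j _ => hs_int j)).symm
    have hsub : (⋃ j ∈ Finset.range K, s j) ⊆ Set.Ioi (1:ℝ) := by
      intro x hx
      simp only [Set.mem_iUnion] at hx
      obtain ⟨j, _, hj⟩ := hx
      exact hs_sub j hj
    have hmono : ∫ x in (⋃ j ∈ Finset.range K, s j), f x ≤ ∫ x in Set.Ioi (1:ℝ), f x := by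
      apply setIntegral_mono_set hint
      · exact (ae_restrict_iff' measurableSet_Ioi).2 (ae_of_all _ hf0)
      · exact HasSubset.Subset.eventuallyLE hsub
    calc ∑ j ∈ Finset.range K, ((j:ℝ)+2)⁻¹ * δ
        ≤ ∑ j ∈ Finset.range K, ∫ x in s j, f x := Finset.sum_le_sum fun j _ => hlow j
      _ = ∫ x in (⋃ j ∈ Finset.range K, s j), f x := hsum
      _ ≤ ∫ x in Set.Ioi (1:ℝ), f x := hmono
  -- conclude summability of the harmonic-type series : contradiction
  have hsummable : Summable (fun j : ℕ => ((j:ℝ)+2)⁻¹ * δ) :=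
    summable_of_sum_range_le (fun n => mul_nonneg (by positivity) hδ0.le) hbound
  have hsummable2 : Summable (fun j : ℕ => ((j:ℝ)+2)⁻¹) := by
    have := hsummable.mul_right δ⁻¹
    simpa [mul_assoc, mul_inv_cancel₀ hδ0.ne'] using this
  have : Summable (fun j : ℕ => ((j:ℕ):ℝ)⁻¹) := by
    rw [← summable_nat_add_iff 2]
    convert hsummable2 using 2 with j
    · rfl
    push_cast
    ring_nf
  exact Real.not_summable_natCast_inv this
end

section
/- Let χ be a non-principal Dirichlet character modulo q with L(χ,1) ≠ 0, and let 1/2 ≤ r < 1. Then inf over c ∈ ℂ and α ∈ (0,1] of ∫_0^1 |t^{1−r} − c t^r ∑_{n<α/t} χ(n)|² dt/t is strictly less than 1/(2−2r). -/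
open MeasureTheory Finset Filter Topology Complex

-- helper: ∫_{(0,a)} t^(x-1) dt = a^x/x
private lemma int_rpow_Ioo {x a : ℝ} (hx : 0 < x) (ha : 0 < a) :
    ∫ t in Set.Ioo (0:ℝ) a, t ^ (x-1) = a ^ x / x := by
  rw [← integral_Ioc_eq_integral_Ioo, ← intervalIntegral.integral_of_le ha.le,
    integral_rpow (Or.inl (by linarith))]
  rw [sub_add_cancel, Real.zero_rpow hx.ne', sub_zero]

private lemma intOn_rpow {x a : ℝ} (hx : 0 < x) (ha : 0 < a) :
    IntegrableOn (fun t : ℝ => t ^ (x-1)) (Set.Ioo 0 a) := by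
  have := (intervalIntegral.intervalIntegrable_rpow' (a := 0) (b := a) (r := x - 1)
    (by linarith)).1
  exact this.mono_set Set.Ioo_subset_Ioc_self

private lemma chunk_zero (q : ℕ) [NeZero q] (χ : DirichletCharacter ℂ q) (hχ : χ ≠ 1) (m : ℕ) :
    ∑ n ∈ Finset.Ico m (m + q), χ (n : ZMod q) = 0 := by
  rw [Finset.sum_Ico_eq_sum_range]
  simp only [Nat.add_sub_cancel_left]
  have h1 : ∑ i ∈ Finset.range q, χ ((m + i : ℕ) : ZMod q)
      = ∑ x : ZMod q, χ ((m : ZMod q) + x) := by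
    refine Finset.sum_nbij' (fun n => (n : ZMod q)) (fun x => x.val) ?_ ?_ ?_ ?_ ?_
    · intro a _; exact Finset.mem_univ _
    · intro x _; exact Finset.mem_range.mpr (ZMod.val_lt x)
    · intro a ha; exact ZMod.val_cast_of_lt (Finset.mem_range.mp ha)
    · intro x _; exact ZMod.natCast_val x |>.trans (ZMod.cast_id _ _)
    · intro a _; push_cast; ring_nf
  rw [h1, show ∑ x : ZMod q, χ ((m : ZMod q) + x) = ∑ x : ZMod q, χ x from Fintype.sum_equiv (Equiv.addLeft ((m : ZMod q))) _ _ (fun x => rfl)]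
  exact MulChar.sum_eq_zero_of_ne_one hχ

private lemma psum_bound' (q : ℕ) [NeZero q] (χ : DirichletCharacter ℂ q) (hχ : χ ≠ 1) :
    ∀ N : ℕ, ‖∑ n ∈ Finset.Ico 1 N, χ (n : ZMod q)‖ ≤ q := by
  have hq : 1 ≤ q := Nat.pos_of_ne_zero (NeZero.ne q)
  intro N
  induction N using Nat.strong_induction_on with
  | _ N ih =>
    rcases le_or_gt N q with h | h
    · calc ‖∑ n ∈ Finset.Ico 1 N, χ (n : ZMod q)‖
          ≤ ∑ n ∈ Finset.Ico 1 N, ‖χ (n : ZMod q)‖ := norm_sum_le _ _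
        _ ≤ ∑ _n ∈ Finset.Ico 1 N, (1:ℝ) :=
            Finset.sum_le_sum fun i _ => DirichletCharacter.norm_le_one χ _
        _ = (N - 1 : ℕ) := by simp
        _ ≤ q := by exact_mod_cast Nat.le_of_lt_succ (by omega)
    · have h1 : 1 ≤ N - q := by omega
      have h2 : N - q ≤ N := by omega
      have hsplit := Finset.sum_Ico_consecutive (fun n : ℕ => χ (n : ZMod q)) h1 h2
      have hc : Finset.Ico (N - q) N = Finset.Ico (N - q) ((N - q) + q) := by
        congr 1; omega
      rw [← hsplit, hc, chunk_zero q χ hχ, add_zero]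
      exact ih (N - q) (by omega)

private lemma Gx (q : ℕ) [NeZero q] (χ : DirichletCharacter ℂ q) (hχ : χ ≠ 1)
    {x : ℝ} (hx : 1 < x) :
    ∫ t in Set.Ioo (0:ℝ) 1, (((t ^ (x-1) : ℝ) : ℂ) * ∑ n ∈ Finset.Ico 1 ⌈1/t⌉₊, χ (n : ZMod q))
      = DirichletCharacter.LFunction χ x / x := by
  have hx0 : (0:ℝ) < x := by linarith
  set μ : Measure ℝ := volume.restrict (Set.Ioo (0:ℝ) 1) with hμ
  set F : ℕ → ℝ → ℂ := fun n => Set.indicator (Set.Ioo (0:ℝ) (1/(n+1) : ℝ))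
    (fun t => ((t ^ (x-1) : ℝ) : ℂ) * χ (((n+1 : ℕ)) : ZMod q)) with hF
  have hle1 : ∀ n : ℕ, (1/(n+1) : ℝ) ≤ 1 := by
    intro n
    rw [div_le_one (by positivity)]
    exact le_add_of_nonneg_left (Nat.cast_nonneg n)
  have hpos : ∀ n : ℕ, (0:ℝ) < 1/(n+1) := fun n => by positivity
  -- integrability of each F n
  have hFmeas : ∀ n, Measurable (fun t => ((t ^ (x-1) : ℝ) : ℂ) * χ (((n+1 : ℕ)) : ZMod q)) := by
    intro n
    exact (Complex.measurable_ofReal.comp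
      (Real.continuous_rpow_const (by linarith)).measurable).mul_const _
  have hFint : ∀ n : ℕ, Integrable (F n) μ := by
    intro n
    refine Integrable.indicator ?_ measurableSet_Ioo
    have h1 : IntegrableOn (fun t : ℝ => t ^ (x-1)) (Set.Ioo 0 1) := intOn_rpow hx0 one_pos
    exact (h1.ofReal.mul_const _)
  -- bound on the norm integrals
  have hnorm_int_le : ∀ n : ℕ, (∫ t, ‖F n t‖ ∂μ) ≤ (1/(n+1) : ℝ) ^ x := by
    intro n
    have hb : ∀ t, ‖F n t‖ ≤ Set.indicator (Set.Ioo (0:ℝ) (1/(n+1) : ℝ))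
        (fun _ => (1/(n+1) : ℝ) ^ (x-1)) t := by
      intro t
      simp only [hF]
      by_cases ht : t ∈ Set.Ioo (0:ℝ) (1/(n+1):ℝ)
      · rw [Set.indicator_of_mem ht, Set.indicator_of_mem ht, norm_mul]
        have h1 : ‖((t ^ (x-1) : ℝ) : ℂ)‖ = t ^ (x-1) := by
          rw [Complex.norm_real, Real.norm_of_nonneg (Real.rpow_nonneg ht.1.le _)]
        rw [h1]
        calc t ^ (x-1) * ‖χ (((n+1 : ℕ)) : ZMod q)‖
            ≤ t ^ (x-1) * 1 := by
              exact mul_le_mul_of_nonneg_left (DirichletCharacter.norm_le_one χ _)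
                (Real.rpow_nonneg ht.1.le _)
          _ = t ^ (x-1) := mul_one _
          _ ≤ (1/(n+1) : ℝ) ^ (x-1) :=
              Real.rpow_le_rpow ht.1.le ht.2.le (by linarith)
      · rw [Set.indicator_of_notMem ht, Set.indicator_of_notMem ht, norm_zero]
    calc (∫ t, ‖F n t‖ ∂μ)
        ≤ ∫ t, Set.indicator (Set.Ioo (0:ℝ) (1/(n+1) : ℝ))
            (fun _ => (1/(n+1) : ℝ) ^ (x-1)) t ∂μ := by
          refine integral_mono ((hFint n).norm) ?_ hb
          exact (integrable_const _).indicator measurableSet_Ioo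
      _ = (1/(n+1) : ℝ) ^ x := by
          rw [integral_indicator measurableSet_Ioo, hμ,
            Measure.restrict_restrict measurableSet_Ioo,
            Set.Ioo_inter_Ioo]
          simp only [max_self, min_eq_left (hle1 n)]
          rw [setIntegral_const, Real.volume_real_Ioo_of_le (hpos n).le, sub_zero,
            smul_eq_mul]
          rw [← Real.rpow_one_add' (hpos n).le (by linarith : (1:ℝ) + (x-1) ≠ 0)]
          ring_nf
  have hsum_bound : Summable (fun n : ℕ => (1/(n+1) : ℝ) ^ x) := by
    have h1 : Summable (fun n : ℕ => ((n:ℝ) ^ x)⁻¹) := Real.summable_nat_rpow_inv.mpr hx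
    have h2 := (summable_nat_add_iff 1).mpr h1
    refine h2.congr fun n => ?_
    rw [← Real.inv_rpow (by positivity), one_div]
    push_cast
    ring_nf
  have hFsum : Summable (fun n : ℕ => ∫ t, ‖F n t‖ ∂μ) := by
    refine Summable.of_nonneg_of_le (fun n => integral_nonneg fun t => norm_nonneg _)
      hnorm_int_le hsum_bound
  -- the tsum identity pointwise
  have hpt : ∀ t ∈ Set.Ioo (0:ℝ) 1,
      (((t ^ (x-1) : ℝ) : ℂ) * ∑ n ∈ Finset.Ico 1 ⌈1/t⌉₊, χ (n : ZMod q))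
        = ∑' n : ℕ, F n t := by
    intro t ht
    have htsum : ∑' n : ℕ, F n t = ∑ n ∈ Finset.range (⌈1/t⌉₊ - 1), F n t := by
      refine tsum_eq_sum ?_
      intro n hn
      rw [Finset.mem_range, not_lt] at hn
      simp only [hF]
      refine Set.indicator_of_notMem ?_ _
      intro hmem
      have h1 : (n+1:ℝ) < 1/t := by
        rw [lt_div_iff₀ ht.1]
        have h := (lt_div_iff₀ (by positivity : (0:ℝ) < (n:ℝ)+1)).mp hmem.2
        linarith
      have h2 : n + 1 < ⌈1/t⌉₊ := Nat.lt_ceil.mpr (by exact_mod_cast h1)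
      omega
    rw [htsum]
    have hterm : ∀ n ∈ Finset.range (⌈1/t⌉₊ - 1),
        F n t = ((t ^ (x-1) : ℝ) : ℂ) * χ (((n+1 : ℕ)) : ZMod q) := by
      intro n hn
      rw [Finset.mem_range] at hn
      have h1 : n + 1 < ⌈1/t⌉₊ := by omega
      have h2 : (n+1:ℝ) < 1/t := by exact_mod_cast Nat.lt_ceil.mp h1
      have h3 : t < 1/(n+1:ℝ) := by
        rw [lt_div_iff₀ (by positivity : (0:ℝ) < (n:ℝ)+1)]
        rw [lt_div_iff₀ ht.1] at h2
        linarith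
      simp only [hF]
      exact Set.indicator_of_mem (Set.mem_Ioo.mpr ⟨ht.1, h3⟩) _
    rw [Finset.sum_congr rfl hterm, ← Finset.mul_sum]
    congr 1
    rw [Finset.sum_Ico_eq_sum_range]
    refine Finset.sum_congr rfl fun n _ => ?_
    rw [add_comm]
  -- apply Fubini
  have hswap := integral_tsum_of_summable_integral_norm hFint hFsum
  have hLHS : ∫ t in Set.Ioo (0:ℝ) 1,
      (((t ^ (x-1) : ℝ) : ℂ) * ∑ n ∈ Finset.Ico 1 ⌈1/t⌉₊, χ (n : ZMod q))
      = ∑' n : ℕ, ∫ t, F n t ∂μ := by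
    rw [hswap]
    exact setIntegral_congr_fun measurableSet_Ioo hpt
  -- compute each integral
  have hint_val : ∀ n : ℕ, (∫ t, F n t ∂μ)
      = χ (((n+1 : ℕ)) : ZMod q) * (((1/(n+1):ℝ) ^ x / x : ℝ) : ℂ) := by
    intro n
    simp only [hF]
    rw [integral_indicator measurableSet_Ioo, hμ,
      Measure.restrict_restrict measurableSet_Ioo, Set.Ioo_inter_Ioo]
    simp only [max_self, min_eq_left (hle1 n)]
    rw [integral_mul_const]
    have hval : (∫ a in Set.Ioo (0:ℝ) (1/(n+1):ℝ), ((a ^ (x-1) : ℝ) : ℂ))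
        = (((1/(n+1):ℝ) ^ x / x : ℝ) : ℂ) := by
      rw [← int_rpow_Ioo hx0 (hpos n)]
      exact integral_ofReal
    rw [hval, mul_comm]
  rw [hLHS]
  simp only [hint_val]
  -- identify with the L-series
  have hsummable : LSeriesSummable (fun n : ℕ => χ (n : ZMod q)) x :=
    LSeriesSummable_of_bounded_of_one_lt_re (m := 1)
      (fun n _ => DirichletCharacter.norm_le_one χ _) (by simpa using hx)
  have hLf : DirichletCharacter.LFunction χ x
      = LSeries (fun n : ℕ => χ (n : ZMod q)) x :=
    DirichletCharacter.LFunction_eq_LSeries χ (by simpa using hx)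
  rw [hLf, LSeries, Summable.tsum_eq_zero_add hsummable, LSeries.term_zero, zero_add]
  rw [← tsum_div_const]
  refine tsum_congr fun n => ?_
  rw [LSeries.term_of_ne_zero (Nat.succ_ne_zero n)]
  have hcast : (((1/(n+1):ℝ) ^ x : ℝ) : ℂ) = ((((n+1:ℕ) : ℂ)) ^ (x:ℂ))⁻¹ := by
    rw [one_div, Real.inv_rpow (by positivity), Complex.ofReal_inv,
      Complex.ofReal_cpow (by positivity)]
    norm_num
  rw [Complex.ofReal_div, hcast]
  ring

private lemma cross_integral (q : ℕ) [NeZero q] (χ : DirichletCharacter ℂ q) (hχ : χ ≠ 1) :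
    ∫ t in Set.Ioo (0:ℝ) 1, (∑ n ∈ Finset.Ico 1 ⌈1/t⌉₊, χ (n : ZMod q))
      = DirichletCharacter.LFunction χ 1 := by
  set g : ℝ → ℂ := fun t => ∑ n ∈ Finset.Ico 1 ⌈1/t⌉₊, χ (n : ZMod q) with hg
  have hgm : Measurable g := by
    have h0 : Measurable fun t : ℝ => 1/t := measurable_const.div measurable_id
    have h1 : Measurable fun t : ℝ => ⌈1/t⌉₊ := h0.nat_ceil
    exact (measurable_from_nat (f := fun N : ℕ => ∑ n ∈ Finset.Ico 1 N, χ (n : ZMod q))).comp h1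
  have hgb : ∀ t, ‖g t‖ ≤ q := fun t => psum_bound' q χ hχ _
  set Φ : ℝ → ℝ → ℂ := fun x t => ((t ^ (x-1) : ℝ) : ℂ) * g t with hΦ
  have hmeas : ∀ x : ℝ, (1:ℝ) ≤ x → AEStronglyMeasurable (Φ x) (volume.restrict (Set.Ioo (0:ℝ) 1)) := by
    intro x hx
    exact ((Complex.measurable_ofReal.comp
      (Real.continuous_rpow_const (by linarith)).measurable).mul hgm).aestronglyMeasurable
  have h1 : Tendsto (fun x => ∫ t in Set.Ioo (0:ℝ) 1, Φ x t) (𝓝[>] (1:ℝ))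
      (𝓝 (∫ t in Set.Ioo (0:ℝ) 1, Φ 1 t)) := by
    refine tendsto_integral_filter_of_dominated_convergence (fun _ => (q:ℝ)) ?_ ?_ ?_ ?_
    · filter_upwards [Ioo_mem_nhdsGT_of_mem (Set.mem_Ico.mpr ⟨le_refl (1:ℝ), one_lt_two⟩)]
        with x hx
      exact hmeas x hx.1.le
    · filter_upwards [Ioo_mem_nhdsGT_of_mem (Set.mem_Ico.mpr ⟨le_refl (1:ℝ), one_lt_two⟩)]
        with x hx
      filter_upwards [self_mem_ae_restrict (measurableSet_Ioo : MeasurableSet (Set.Ioo (0:ℝ) 1))]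
        with t ht
      simp only [hΦ, norm_mul, Complex.norm_real]
      calc ‖t ^ (x-1)‖ * ‖g t‖ ≤ 1 * (q:ℝ) := by
            refine mul_le_mul ?_ (hgb t) (norm_nonneg _) zero_le_one
            rw [Real.norm_of_nonneg (Real.rpow_nonneg ht.1.le _)]
            exact Real.rpow_le_one ht.1.le ht.2.le (by linarith [hx.1])
        _ = (q:ℝ) := one_mul _
    · exact (integrableOn_const_iff).mpr (Or.inr measure_Ioo_lt_top)
    · filter_upwards [self_mem_ae_restrict (measurableSet_Ioo : MeasurableSet (Set.Ioo (0:ℝ) 1))]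
        with t ht
      have hc : ContinuousAt (fun x : ℝ => ((t ^ (x-1) : ℝ) : ℂ) * g t) 1 := by
        refine ContinuousAt.mul ?_ continuousAt_const
        refine Complex.continuous_ofReal.continuousAt.comp ?_
        exact (Real.continuousAt_const_rpow ht.1.ne').comp
          ((continuous_id.sub continuous_const).continuousAt)
      exact hc.tendsto.mono_left nhdsWithin_le_nhds
  have h2 : (fun x : ℝ => ∫ t in Set.Ioo (0:ℝ) 1, Φ x t)
      =ᶠ[𝓝[>] (1:ℝ)] fun x : ℝ => DirichletCharacter.LFunction χ x / x := by
    filter_upwards [self_mem_nhdsWithin] with x hx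
    exact Gx q χ hχ hx
  have h3 : Tendsto (fun x : ℝ => DirichletCharacter.LFunction χ x / x) (𝓝[>] (1:ℝ))
      (𝓝 (DirichletCharacter.LFunction χ 1 / 1)) := by
    have hc : ContinuousAt (fun x : ℝ => DirichletCharacter.LFunction χ x / x) 1 := by
      refine ContinuousAt.div ?_ (Complex.continuous_ofReal.continuousAt) (by norm_num)
      exact ((DirichletCharacter.differentiable_LFunction hχ).continuous.comp
        Complex.continuous_ofReal).continuousAt
    have := hc.tendsto.mono_left (nhdsWithin_le_nhds (s := Set.Ioi (1:ℝ)))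
    simpa using this
  have h4 := tendsto_nhds_unique (h1.congr' h2) h3
  have h5 : ∫ t in Set.Ioo (0:ℝ) 1, Φ 1 t = ∫ t in Set.Ioo (0:ℝ) 1, g t := by
    refine setIntegral_congr_fun measurableSet_Ioo fun t ht => ?_
    simp only [hΦ, sub_self, Real.rpow_zero, Complex.ofReal_one, one_mul]
  rw [← h5, h4]
  simp

theorem stmt17 (q : ℕ) [NeZero q] (χ : DirichletCharacter ℂ q) (hχ : χ ≠ 1)
    (hL : DirichletCharacter.LFunction χ 1 ≠ 0) (r : ℝ) (hr : 1/2 ≤ r) (hr1 : r < 1) :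
    sInf {x : ℝ | ∃ (c : ℂ) (α : ℝ), α ∈ Set.Ioc (0:ℝ) 1 ∧
        x = ∫ t in Set.Ioo (0:ℝ) 1,
          ‖((t^(1-r) : ℝ) : ℂ) - c * ((t^r : ℝ) : ℂ)
            * ∑ n ∈ Finset.Ico 1 ⌈α/t⌉₊, χ (n : ZMod q)‖^2 / t}
      < 1/(2 - 2*r) := by
  classical
  have h2r : (0:ℝ) < 2 - 2*r := by linarith
  set g : ℝ → ℂ := fun t => ∑ n ∈ Finset.Ico 1 ⌈1/t⌉₊, χ (n : ZMod q) with hg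
  have hgm : Measurable g := by
    have h0 : Measurable fun t : ℝ => 1/t := measurable_const.div measurable_id
    exact (measurable_from_nat (f := fun N : ℕ => ∑ n ∈ Finset.Ico 1 N, χ (n : ZMod q))).comp
      h0.nat_ceil
  have hgb : ∀ t, ‖g t‖ ≤ q := fun t => psum_bound' q χ hχ _
  set L : ℂ := DirichletCharacter.LFunction χ 1 with hL1
  have hLg : ∫ t in Set.Ioo (0:ℝ) 1, g t = L := cross_integral q χ hχ
  set ε : ℝ := 1/((q:ℝ)^2+1) with hεdef
  have hε : 0 < ε := by positivity
  set c : ℂ := (ε:ℂ) * (starRingEnd ℂ) L with hc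
  have hμfin : volume (Set.Ioo (0:ℝ) 1) < ⊤ := measure_Ioo_lt_top
  -- integrability
  have hi1 : IntegrableOn (fun t : ℝ => t ^ (1-2*r)) (Set.Ioo 0 1) := by
    have := (intervalIntegral.intervalIntegrable_rpow' (a := 0) (b := 1) (r := 1-2*r)
      (by linarith)).1
    exact this.mono_set Set.Ioo_subset_Ioc_self
  have hv1 : ∫ t in Set.Ioo (0:ℝ) 1, t ^ (1-2*r) = 1/(2-2*r) := by
    have h := int_rpow_Ioo (x := 2-2*r) h2r one_pos
    rw [show (2-2*r)-1 = 1-2*r by ring] at h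
    rw [h, Real.one_rpow, one_div]
  have hg_int : Integrable g (volume.restrict (Set.Ioo (0:ℝ) 1)) := by
    refine Integrable.mono' (g := fun _ => (q:ℝ))
      ((integrableOn_const_iff).mpr (Or.inr hμfin)) hgm.aestronglyMeasurable ?_
    exact Eventually.of_forall hgb
  have hcg_int : Integrable (fun t => c * g t) (volume.restrict (Set.Ioo (0:ℝ) 1)) :=
    hg_int.const_mul c
  have hi2 : Integrable (fun t => (c * g t).re) (volume.restrict (Set.Ioo (0:ℝ) 1)) := by
    refine Integrable.mono' (g := fun _ => ‖c‖ * (q:ℝ))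
      ((integrableOn_const_iff).mpr (Or.inr hμfin))
      (Complex.measurable_re.comp (measurable_const.mul hgm)).aestronglyMeasurable ?_
    refine Eventually.of_forall fun t => ?_
    calc ‖(c * g t).re‖ ≤ ‖c * g t‖ := by
          rw [Real.norm_eq_abs]; exact Complex.abs_re_le_norm _
      _ = ‖c‖ * ‖g t‖ := norm_mul _ _
      _ ≤ ‖c‖ * q := mul_le_mul_of_nonneg_left (hgb t) (norm_nonneg _)
  have hi3 : Integrable (fun t => t^(2*r-1) * ‖g t‖^2) (volume.restrict (Set.Ioo (0:ℝ) 1)) := by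
    refine Integrable.mono' (g := fun _ => (q:ℝ)^2)
      ((integrableOn_const_iff).mpr (Or.inr hμfin))
      (((Real.continuous_rpow_const (by linarith)).measurable).mul
        (hgm.norm.pow_const 2)).aestronglyMeasurable ?_
    filter_upwards [self_mem_ae_restrict (measurableSet_Ioo : MeasurableSet (Set.Ioo (0:ℝ) 1))]
      with t ht
    have h1 : (0:ℝ) ≤ t^(2*r-1) := Real.rpow_nonneg ht.1.le _
    have h2 : t^(2*r-1) ≤ 1 := Real.rpow_le_one ht.1.le ht.2.le (by linarith)
    have h3 : ‖g t‖^2 ≤ (q:ℝ)^2 := by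
      have := hgb t
      nlinarith [norm_nonneg (g t)]
    rw [Real.norm_eq_abs, _root_.abs_of_nonneg (mul_nonneg h1 (sq_nonneg _))]
    nlinarith [sq_nonneg (‖g t‖)]
  -- pointwise expansion
  have hexp : ∀ t ∈ Set.Ioo (0:ℝ) 1,
      ‖((t^(1-r) : ℝ) : ℂ) - c * ((t^r : ℝ) : ℂ) * g t‖^2 / t
        = t^(1-2*r) - 2*(c * g t).re + ‖c‖^2 * (t^(2*r-1) * ‖g t‖^2) := by
    intro t ht
    have ht0 : (0:ℝ) < t := ht.1
    set u : ℂ := c * g t with hu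
    have hw : c * ((t^r : ℝ) : ℂ) * g t = ((t^r : ℝ) : ℂ) * u := by rw [hu]; ring
    have habs : ‖((t^(1-r) : ℝ) : ℂ) - ((t^r : ℝ) : ℂ) * u‖^2
        = t^(1-r)*t^(1-r) - 2*((t^(1-r)*t^r)*u.re) + (t^r*t^r)*Complex.normSq u := by
      rw [Complex.sq_norm, Complex.normSq_sub, Complex.normSq_mul,
        Complex.normSq_ofReal, Complex.normSq_ofReal]
      simp only [Complex.mul_re, Complex.mul_im, Complex.conj_re, Complex.conj_im,
        Complex.ofReal_re, Complex.ofReal_im, Complex.normSq_apply]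
      ring
    have e1 : t^(1-r)*t^(1-r) = t^(1-2*r)*t := by
      rw [← Real.rpow_add ht0, ← Real.rpow_add_one ht0.ne']
      congr 1
      ring
    have e2 : t^r*t^r = t^(2*r-1)*t := by
      rw [← Real.rpow_add ht0, ← Real.rpow_add_one ht0.ne']
      congr 1
      ring
    have e3 : t^(1-r)*t^r = t := by
      rw [← Real.rpow_add ht0, show (1-r)+r = 1 by ring, Real.rpow_one]
    have hnsq : Complex.normSq u = ‖c‖^2 * ‖g t‖^2 := by
      rw [Complex.normSq_eq_norm_sq, hu, norm_mul]
      ring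
    rw [hw, habs, e1, e2, e3, hnsq, div_eq_iff ht0.ne']
    rw [hu]
    ring
  -- value of the full integral
  set x₀ : ℝ := ∫ t in Set.Ioo (0:ℝ) 1,
      ‖((t^(1-r) : ℝ) : ℂ) - c * ((t^r : ℝ) : ℂ) * ∑ n ∈ Finset.Ico 1 ⌈1/t⌉₊, χ (n : ZMod q)‖^2 / t
    with hx₀
  have hval : x₀ = 1/(2-2*r) - 2*(c*L).re
      + ∫ t in Set.Ioo (0:ℝ) 1, ‖c‖^2 * (t^(2*r-1) * ‖g t‖^2) := by
    rw [hx₀]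
    rw [setIntegral_congr_fun measurableSet_Ioo hexp]
    rw [integral_add (f := fun t => t ^ (1-2*r) - 2*(c * g t).re)
      (g := fun t => ‖c‖^2 * (t^(2*r-1) * ‖g t‖^2))
      ((hi1.sub (hi2.const_mul 2))) (hi3.const_mul (‖c‖^2)),
      integral_sub (f := fun t => t ^ (1-2*r)) (g := fun t => 2*(c * g t).re)
      hi1 (hi2.const_mul 2)]
    simp only [integral_const_mul]
    rw [hv1]
    have hre : ∫ t in Set.Ioo (0:ℝ) 1, (c * g t).re = (c * L).re := by
      have h2 : ∫ t in Set.Ioo (0:ℝ) 1, c * g t = c * L := by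
        rw [← hLg]
        exact integral_const_mul c g
      have h := integral_re hcg_int
      rw [h2] at h
      simpa using h
    rw [hre]
  have hCb : (∫ t in Set.Ioo (0:ℝ) 1, ‖c‖^2 * (t^(2*r-1) * ‖g t‖^2)) ≤ ‖c‖^2 * (q:ℝ)^2 := by
    simp only [integral_const_mul]
    refine mul_le_mul_of_nonneg_left ?_ (by positivity)
    calc (∫ t in Set.Ioo (0:ℝ) 1, t^(2*r-1) * ‖g t‖^2)
        ≤ ∫ _t in Set.Ioo (0:ℝ) 1, (q:ℝ)^2 := by
          refine setIntegral_mono_on hi3 ((integrableOn_const_iff).mpr (Or.inr hμfin))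
            measurableSet_Ioo fun t ht => ?_
          have h2 : t^(2*r-1) ≤ 1 := Real.rpow_le_one ht.1.le ht.2.le (by linarith)
          have h3 : ‖g t‖^2 ≤ (q:ℝ)^2 := by
            have := hgb t
            nlinarith [norm_nonneg (g t)]
          nlinarith [sq_nonneg (‖g t‖), Real.rpow_nonneg ht.1.le (2*r-1)]
      _ = (q:ℝ)^2 := by
          rw [setIntegral_const, Real.volume_real_Ioo_of_le zero_le_one, smul_eq_mul]
          norm_num
  -- the chosen c makes the value < 1/(2-2r)
  have hcL : (c * L).re = ε * ‖L‖^2 := by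
    have h0 : c * L = (ε:ℂ) * (L * (starRingEnd ℂ) L) := by rw [hc]; ring
    rw [h0, Complex.mul_conj, ← Complex.ofReal_mul, Complex.ofReal_re,
      Complex.normSq_eq_norm_sq]
  have hnorm_c : ‖c‖ = ε * ‖L‖ := by
    rw [hc, norm_mul, Complex.norm_real, Real.norm_of_nonneg hε.le, RCLike.norm_conj]
  have hLpos : (0:ℝ) < ‖L‖ := norm_pos_iff.mpr hL
  have hεq : ε * (q:ℝ)^2 < 1 := by
    rw [hεdef, div_mul_eq_mul_div, one_mul, div_lt_one (by positivity)]
    linarith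
  have hkey : ε^2*‖L‖^2*(q:ℝ)^2 < ε*‖L‖^2 := by
    have hpos : (0:ℝ) < ε*‖L‖^2 := by positivity
    nlinarith [mul_lt_mul_of_pos_left hεq hpos]
  have hx₀lt : x₀ < 1/(2-2*r) := by
    rw [hval, hcL]
    have h1 : ‖c‖^2 * (q:ℝ)^2 = ε^2*‖L‖^2*(q:ℝ)^2 := by rw [hnorm_c]; ring
    have hεL : (0:ℝ) < ε*‖L‖^2 := by positivity
    rw [h1] at hCb
    linarith
  refine lt_of_le_of_lt (csInf_le ?_ ?_) hx₀lt
  · refine ⟨0, fun y hy => ?_⟩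
    obtain ⟨c', α, hα, rfl⟩ := hy
    refine setIntegral_nonneg measurableSet_Ioo fun t ht => ?_
    exact div_nonneg (by positivity) ht.1.le
  · exact ⟨c, 1, ⟨one_pos, le_rfl⟩, hx₀⟩
end
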